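/- (Apolarity over ℝ for a set of distinct real points.) Let F ∈ ℝ[x_0,...,x_n] be homogeneous of degree d and let P_1, ..., P_r be points of ℝ^{n+1} \ {0} with corresponding linear forms L_1, ..., L_r. If the homogeneous ideal I_𝕏 of the reduced set of projective points 𝕏 = {[P_1],...,[P_r]} is contained in F^⊥, then F = Σ_{i=1}^r c_i L_i^d for some c_i ∈ ℝ; consequently rk_ℝ(F) ≤ r. -/

import Mathlib

open MvPolynomial

/-- The action of the dual ring by differentiation: `X_i ↦ ∂/∂x_i`. -/
noncomputable def diffOp {n : ℕ} (P F : MvPolynomial (Fin n) ℝ) : MvPolynomial (Fin n) ℝ :=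
  ∑ b ∈ P.support, P.coeff b •
    ((List.ofFn fun i : Fin n =>
      ((pderiv i).toLinearMap : Module.End ℝ (MvPolynomial (Fin n) ℝ)) ^ b i).prod F)

/-- The Waring rank over `K` of a form `F` of degree `d`. -/
noncomputable def waringRank (K : Type*) [Field K] {n : ℕ} (d : ℕ)
    (F : MvPolynomial (Fin n) K) : ℕ :=
  sInf {s | ∃ (c : Fin s → K) (L : Fin s → Fin n → K),
    F = ∑ i, C (c i) * (∑ j, C (L i j) * X j) ^ d}

namespace Apolar

variable {N : ℕ}

lemma pderiv_pow_monomial (i : Fin N) (k : ℕ) (m : Fin N →₀ ℕ) (c : ℝ) :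
    (((pderiv i).toLinearMap : Module.End ℝ (MvPolynomial (Fin N) ℝ)) ^ k) (monomial m c) =
      monomial (m - Finsupp.single i k) (c * ((m i).descFactorial k : ℝ)) := by
  induction k generalizing m c with
  | zero => simp
  | succ k ih =>
    rw [pow_succ, Module.End.mul_apply]
    have h1 : (((pderiv i).toLinearMap : Module.End ℝ (MvPolynomial (Fin N) ℝ)))
        (monomial m c) = monomial (m - Finsupp.single i 1) (c * (m i : ℝ)) := by
      simp [pderiv_monomial]
    rw [h1, ih]
    cases h : m i with
    | zero =>
      simp [h, Nat.descFactorial_of_lt (Nat.succ_pos k)]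
    | succ s =>
      have he : m - Finsupp.single i 1 - Finsupp.single i k = m - Finsupp.single i (k + 1) := by
        rw [tsub_tsub, ← Finsupp.single_add, add_comm]
      have hc : (m - Finsupp.single i (1:ℕ)) i = s := by
        rw [Finsupp.tsub_apply, Finsupp.single_eq_same, h]; omega
      rw [he, hc]
      congr 1
      rw [Nat.succ_descFactorial_succ]
      push_cast
      ring

lemma prod_pderiv_monomial (b : Fin N →₀ ℕ) (l : List (Fin N)) (hl : l.Nodup)
    (m : Fin N →₀ ℕ) (c : ℝ) :
    ((l.map fun i =>
        ((pderiv i).toLinearMap : Module.End ℝ (MvPolynomial (Fin N) ℝ)) ^ b i).prod)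
        (monomial m c) =
      monomial (m - ∑ i ∈ l.toFinset, Finsupp.single i (b i))
        (c * ∏ i ∈ l.toFinset, ((m i).descFactorial (b i) : ℝ)) := by
  induction l with
  | nil => simp
  | cons i t ih =>
    obtain ⟨hit, ht⟩ := List.nodup_cons.mp hl
    have hit' : i ∉ t.toFinset := by simpa using hit
    rw [List.map_cons, List.prod_cons, Module.End.mul_apply, ih ht, pderiv_pow_monomial]
    have hSt : (∑ j ∈ t.toFinset, Finsupp.single j (b j)) i = 0 := by
      rw [Finset.sum_apply']
      exact Finset.sum_eq_zero fun j hj =>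
        Finsupp.single_eq_of_ne (by rintro rfl; exact hit' hj)
    have hmi : (m - ∑ j ∈ t.toFinset, Finsupp.single j (b j)) i = m i := by
      rw [Finsupp.tsub_apply, hSt, Nat.sub_zero]
    rw [hmi, List.toFinset_cons, Finset.sum_insert hit', Finset.prod_insert hit', tsub_tsub]
    rw [add_comm (Finsupp.single i (b i))]
    congr 1
    ring

lemma diffOp_monomial (Q : MvPolynomial (Fin N) ℝ) (m : Fin N →₀ ℕ) (c : ℝ) :
    diffOp Q (monomial m c) =
      ∑ b ∈ Q.support, Q.coeff b •
        monomial (m - b) (c * ∏ i, ((m i).descFactorial (b i) : ℝ)) := by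
  unfold diffOp
  refine Finset.sum_congr rfl fun b _ => ?_
  rw [List.ofFn_eq_map, prod_pderiv_monomial b _ (List.nodup_finRange N),
    List.toFinset_finRange, Finsupp.univ_sum_single]

lemma diffOp_sum {ι : Type*} (Q : MvPolynomial (Fin N) ℝ) (s : Finset ι)
    (f : ι → MvPolynomial (Fin N) ℝ) :
    diffOp Q (∑ x ∈ s, f x) = ∑ x ∈ s, diffOp Q (f x) := by
  have h : ∀ G : MvPolynomial (Fin N) ℝ, diffOp Q G =
      (∑ b ∈ Q.support, Q.coeff b • ((List.ofFn fun i : Fin N =>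
        ((pderiv i).toLinearMap : Module.End ℝ (MvPolynomial (Fin N) ℝ)) ^ b i).prod)) G := by
    intro G
    simp [diffOp, LinearMap.sum_apply, LinearMap.smul_apply]
  simp_rw [h, map_sum]


noncomputable def wt (m : Fin N →₀ ℕ) : ℝ := ∏ i, ((m i).factorial : ℝ)

lemma wt_pos (m : Fin N →₀ ℕ) : 0 < wt m :=
  Finset.prod_pos fun i _ => by exact_mod_cast Nat.factorial_pos (m i)

noncomputable def pinner (G H : MvPolynomial (Fin N) ℝ) : ℝ :=
  ∑ m ∈ H.support, wt m * G.coeff m * H.coeff m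

lemma pinner_eq_sum (G H : MvPolynomial (Fin N) ℝ) {s : Finset (Fin N →₀ ℕ)}
    (hs : H.support ⊆ s) :
    pinner G H = ∑ m ∈ s, wt m * G.coeff m * H.coeff m := by
  unfold pinner
  refine (Finset.sum_subset hs (f := fun m => wt m * G.coeff m * H.coeff m) ?_)
  intro m _ hm
  rw [notMem_support_iff.mp hm, mul_zero]

lemma pinner_comm (G H : MvPolynomial (Fin N) ℝ) : pinner G H = pinner H G := by
  rw [pinner_eq_sum G H (Finset.subset_union_right (s₁ := G.support)),
    pinner_eq_sum H G (Finset.subset_union_left (s₂ := H.support))]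
  exact Finset.sum_congr rfl fun m _ => by ring

lemma pinner_add_left (G₁ G₂ H : MvPolynomial (Fin N) ℝ) :
    pinner (G₁ + G₂) H = pinner G₁ H + pinner G₂ H := by
  unfold pinner
  rw [← Finset.sum_add_distrib]
  exact Finset.sum_congr rfl fun m _ => by rw [coeff_add]; ring

lemma pinner_smul_left (r : ℝ) (G H : MvPolynomial (Fin N) ℝ) :
    pinner (r • G) H = r * pinner G H := by
  unfold pinner
  rw [Finset.mul_sum]
  exact Finset.sum_congr rfl fun m _ => by rw [coeff_smul]; simp; ring

lemma pinner_self_nonneg (G : MvPolynomial (Fin N) ℝ) : 0 ≤ pinner G G :=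
  Finset.sum_nonneg fun m _ => by
    rw [mul_assoc]; exact mul_nonneg (wt_pos m).le (mul_self_nonneg _)

lemma pinner_self_eq_zero (G : MvPolynomial (Fin N) ℝ) (h : pinner G G = 0) : G = 0 := by
  rw [← support_eq_empty]
  by_contra h'
  obtain ⟨m, hm⟩ := Finset.nonempty_iff_ne_empty.mpr h'
  have h0 := (Finset.sum_eq_zero_iff_of_nonneg fun m _ => by
    rw [mul_assoc]; exact mul_nonneg (wt_pos m).le (mul_self_nonneg _)).mp h m hm
  have hc : G.coeff m ≠ 0 := mem_support_iff.mp hm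
  have := wt_pos m
  rcases mul_eq_zero.mp h0 with h1 | h1
  · rcases mul_eq_zero.mp h1 with h2 | h2
    · exact absurd h2 (ne_of_gt this)
    · exact hc h2
  · exact hc h1

lemma degree_eq_sum_univ (m : Fin N →₀ ℕ) : m.degree = ∑ i, m i :=
  Finset.sum_subset (Finset.subset_univ _)
    (fun i _ hi => Finsupp.notMem_support_iff.mp hi)

lemma sum_eq_of_homog {dd : ℕ} {φ : MvPolynomial (Fin N) ℝ} (h : φ.IsHomogeneous dd)
    {m : Fin N →₀ ℕ} (hm : m ∈ φ.support) : ∑ i, m i = dd := by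
  rw [← degree_eq_sum_univ]
  by_contra hne
  exact mem_support_iff.mp hm (h.coeff_eq_zero hne)

lemma finsupp_eq_of_le_sum {b m : Fin N →₀ ℕ} (hle : ∀ i, b i ≤ m i)
    (hs : ∑ i, b i = ∑ i, m i) : b = m := by
  ext i
  by_contra hne
  have hlt : b i < m i := lt_of_le_of_ne (hle i) hne
  have := Finset.sum_lt_sum (fun j _ => hle j) ⟨i, Finset.mem_univ i, hlt⟩
  omega


lemma diffOp_eq_C_pinner {dd : ℕ} {Q F : MvPolynomial (Fin N) ℝ}
    (hQ : Q.IsHomogeneous dd) (hF : F.IsHomogeneous dd) :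
    diffOp Q F = C (pinner Q F) := by
  conv_lhs => rw [← support_sum_monomial_coeff F]
  rw [diffOp_sum]
  unfold pinner
  rw [map_sum]
  refine Finset.sum_congr rfl fun m hm => ?_
  rw [diffOp_monomial]
  have hmd : ∑ i, m i = dd := sum_eq_of_homog hF hm
  rw [Finset.sum_eq_single m ?h1 ?h2]
  · rw [tsub_self]
    have : ∀ i : Fin N, ((m i).descFactorial (m i) : ℝ) = ((m i).factorial : ℝ) := by
      intro i; rw [Nat.descFactorial_self]
    simp only [this]
    rw [monomial_zero', smul_eq_C_mul, ← C_mul, wt]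
    congr 1
    ring
  · intro b hb hbm
    have hbd : ∑ i, b i = dd := sum_eq_of_homog hQ hb
    have hex : ∃ i, m i < b i := by
      by_contra hcon
      push_neg at hcon
      exact hbm (finsupp_eq_of_le_sum hcon (hbd.trans hmd.symm))
    obtain ⟨i, hi⟩ := hex
    have h0 : ((m i).descFactorial (b i) : ℝ) = 0 := by
      rw [Nat.descFactorial_eq_zero_iff_lt.mpr hi, Nat.cast_zero]
    rw [Finset.prod_eq_zero (Finset.mem_univ i) h0, mul_zero, monomial_zero, smul_zero]
  · intro hm'
    rw [notMem_support_iff.mp hm', zero_smul]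

lemma coeff_lin_pow (p : Fin N → ℝ) (dd : ℕ) (m : Fin N →₀ ℕ) (hm : ∑ i, m i = dd) :
    coeff m ((∑ j, C (p j) * X j) ^ dd) =
      (Nat.multinomial Finset.univ ⇑m : ℝ) * ∏ j, p j ^ m j := by
  have hterm : ∀ k : Fin N → ℕ,
      ((Nat.multinomial Finset.univ k : MvPolynomial (Fin N) ℝ) *
          ∏ j, (C (p j) * X j : MvPolynomial (Fin N) ℝ) ^ k j) =
        monomial (Finsupp.equivFunOnFinite.symm k)
          ((Nat.multinomial Finset.univ k : ℝ) * ∏ j, p j ^ k j) := by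
    intro k
    have h1 : ∀ j : Fin N, (C (p j) * X j : MvPolynomial (Fin N) ℝ) ^ k j =
        C (p j ^ k j) * monomial (Finsupp.single j (k j)) 1 := by
      intro j
      rw [mul_pow, ← map_pow, X_pow_eq_monomial]
    rw [Finset.prod_congr rfl fun j _ => h1 j, Finset.prod_mul_distrib, ← map_prod,
      ← monomial_sum_index, ← Finsupp.equivFunOnFinite_symm_eq_sum, ← C_eq_coe_nat,
      C_mul_monomial]
  rw [Finset.sum_pow_eq_sum_piAntidiag, coeff_sum]
  rw [Finset.sum_congr rfl fun k _ => congrArg (coeff m) (hterm k)]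
  rw [Finset.sum_eq_single (⇑m : Fin N → ℕ)]
  · rw [coeff_monomial, if_pos (Finsupp.equivFunOnFinite_symm_coe m)]
  · intro k _ hkm
    rw [coeff_monomial, if_neg]
    intro h
    exact hkm (by rwa [Equiv.symm_apply_eq] at h)
  · intro hmem
    exact absurd (Finset.mem_piAntidiag.mpr ⟨hm, fun i _ => Finset.mem_univ i⟩) hmem

lemma pinner_linpow (p : Fin N → ℝ) (dd : ℕ) (Q : MvPolynomial (Fin N) ℝ)
    (hQ : Q.IsHomogeneous dd) :
    pinner ((∑ j, C (p j) * X j) ^ dd) Q = (dd.factorial : ℝ) * eval p Q := by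
  unfold pinner
  rw [eval_eq', Finset.mul_sum]
  refine Finset.sum_congr rfl fun m hm => ?_
  have hmd := sum_eq_of_homog hQ hm
  rw [coeff_lin_pow p dd m hmd]
  have hnat : (∏ i, (m i).factorial) * Nat.multinomial Finset.univ ⇑m = dd.factorial := by
    rw [Nat.multinomial_spec, hmd]
  have key : wt m * (Nat.multinomial Finset.univ ⇑m : ℝ) = (dd.factorial : ℝ) := by
    rw [wt, ← Nat.cast_prod, ← Nat.cast_mul, hnat]
  rw [← key]
  ring

end Apolar

set_option maxHeartbeats 2000000 in
set_option synthInstance.maxHeartbeats 1000000 in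
/-- Real apolarity lemma for a set of distinct real points: if every form vanishing at
the points `P_1,…,P_r` annihilates the degree-`d` form `F`, then `F = ∑ c_i L_i^d`
with `L_i` the linear forms associated to the `P_i`; consequently `rk_ℝ(F) ≤ r`. -/
theorem stmt_18 (n d r : ℕ) (F : MvPolynomial (Fin (n + 1)) ℝ) (hF : F.IsHomogeneous d)
    (P : Fin r → Fin (n + 1) → ℝ) (hP : ∀ i, P i ≠ 0)
    (hapolar : ∀ Q : MvPolynomial (Fin (n + 1)) ℝ, (∃ m, Q.IsHomogeneous m) →
      (∀ i, eval (P i) Q = 0) → diffOp Q F = 0) :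
    (∃ c : Fin r → ℝ, F = ∑ i, C (c i) * (∑ j, C (P i j) * X j) ^ d) ∧
      waringRank ℝ d F ≤ r := by
  classical
  let L : Fin r → MvPolynomial (Fin (n + 1)) ℝ := fun i => ∑ j, C (P i j) * X j
  have hLhom : ∀ i, (L i ^ d).IsHomogeneous d := by
    intro i
    have h1 : (L i).IsHomogeneous 1 :=
      IsHomogeneous.sum _ _ _ fun j _ => isHomogeneous_C_mul_X (P i j) j
    simpa using h1.pow d
  let core : InnerProductSpace.Core ℝ (MvPolynomial (Fin (n + 1)) ℝ) :=
    { inner := Apolar.pinner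
      conj_inner_symm := fun x y => by
        simpa using (Apolar.pinner_comm y x)
      re_inner_nonneg := fun x => by simpa using Apolar.pinner_self_nonneg x
      add_left := Apolar.pinner_add_left
      smul_left := fun x y r => by
        simpa using Apolar.pinner_smul_left r x y
      definite := Apolar.pinner_self_eq_zero }
  letI : NormedAddCommGroup (MvPolynomial (Fin (n + 1)) ℝ) := core.toNormedAddCommGroup
  letI : UniformSpace (MvPolynomial (Fin (n + 1)) ℝ) := PseudoMetricSpace.toUniformSpace
  letI : TopologicalSpace (MvPolynomial (Fin (n + 1)) ℝ) := UniformSpace.toTopologicalSpace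
  letI : InnerProductSpace ℝ (MvPolynomial (Fin (n + 1)) ℝ) := InnerProductSpace.ofCore core.toCore
  have hinner : ∀ a b : MvPolynomial (Fin (n + 1)) ℝ, (inner ℝ a b : ℝ) = Apolar.pinner a b := fun _ _ => rfl
  let W : Submodule ℝ (MvPolynomial (Fin (n + 1)) ℝ) := Submodule.span ℝ (Set.range fun i => L i ^ d)
  haveI : FiniteDimensional ℝ W := FiniteDimensional.span_of_finite ℝ (Set.finite_range _)
  haveI : CompleteSpace W := FiniteDimensional.complete ℝ W
  have hWF : F ∈ W := by
    rw [← Submodule.orthogonal_orthogonal W, Submodule.mem_orthogonal]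
    intro Q hQ
    rw [hinner]
    set Qd := MvPolynomial.homogeneousComponent d Q with hQdDef
    have hQdh : Qd.IsHomogeneous d := homogeneousComponent_isHomogeneous d Q
    have hcoe : ∀ H : MvPolynomial (Fin (n + 1)) ℝ, H.IsHomogeneous d → Apolar.pinner Q H = Apolar.pinner Qd H := by
      intro H hH
      unfold Apolar.pinner
      refine Finset.sum_congr rfl fun m hm => ?_
      have hdeg : m.degree = d := by
        by_contra hne
        exact mem_support_iff.mp hm (hH.coeff_eq_zero hne)
      rw [hQdDef, coeff_homogeneousComponent, if_pos hdeg]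
    have heval : ∀ i, eval (P i) Qd = 0 := by
      intro i
      have h0 : Apolar.pinner (L i ^ d) Q = 0 := by
        rw [← hinner]
        exact hQ _ (Submodule.subset_span ⟨i, rfl⟩)
      have h2 : Apolar.pinner (L i ^ d) Qd = 0 := by
        rw [Apolar.pinner_comm, ← hcoe _ (hLhom i), Apolar.pinner_comm]
        exact h0
      have h3 := Apolar.pinner_linpow (P i) d Qd hQdh
      rw [h2] at h3
      have hd0 : (d.factorial : ℝ) ≠ 0 := Nat.cast_ne_zero.mpr (Nat.factorial_ne_zero d)
      exact (mul_eq_zero.mp h3.symm).resolve_left hd0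
    have hdiff : diffOp Qd F = 0 := hapolar Qd ⟨d, hQdh⟩ heval
    have hC : C (Apolar.pinner Qd F) = (0 : MvPolynomial (Fin (n + 1)) ℝ) := by
      rw [← Apolar.diffOp_eq_C_pinner hQdh hF]
      exact hdiff
    have h4 : Apolar.pinner Qd F = 0 := by
      have := C_injective (Fin (n + 1)) ℝ
      exact this (by simpa using hC)
    rw [hcoe F hF, h4]
  obtain ⟨c, hc⟩ := (Submodule.mem_span_range_iff_exists_fun ℝ).mp hWF
  have hFeq : F = ∑ i, C (c i) * (∑ j, C (P i j) * X j) ^ d := by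
    rw [← hc]
    exact Finset.sum_congr rfl fun i _ => smul_eq_C_mul _ _
  refine ⟨⟨c, hFeq⟩, ?_⟩
  exact Nat.sInf_le ⟨c, P, hFeq⟩
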